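/- arXiv:2109.12510 — 2 statements merged into one kernel-verified Lean document; each statement's English description precedes it below -/
import Mathlib

section
/- For online gradient descent with decision set X a compact convex subset of R^d of diameter D, convex differentiable losses ℓ_t with gradients bounded in norm by G, and constant stepsize α = D/(G√T), the regret satisfies Reg(T) = Σ_{t=1}^T ℓ_t(x_t) − min_{x∈X} Σ_{t=1}^T ℓ_t(x) ≤ D G √T. -/
open Finset

section Aux
variable {E : Type*} [NormedAddCommGroup E] [InnerProductSpace ℝ E] [CompleteSpace E]

/-- First-order condition for convex differentiable functions. -/
lemma ogd_first_order {f : E → ℝ} (hf : ConvexOn ℝ Set.univ f) {x g : E}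
    (h : HasGradientAt f g x) (y : E) :
    (inner ℝ g (y - x) : ℝ) ≤ f y - f x := by
  have hc : HasDerivAt (fun s : ℝ => x + s • (y - x)) (y - x) 0 := by
    simpa using ((hasDerivAt_id (0 : ℝ)).smul_const (y - x)).const_add x
  have hF : HasFDerivAt f (InnerProductSpace.toDual ℝ E g) x :=
    (hasGradientAt_iff_hasFDerivAt).mp h
  have hφ : HasDerivAt (fun s : ℝ => f (x + s • (y - x))) (inner ℝ g (y - x)) 0 := by
    have hF' : HasFDerivAt f (InnerProductSpace.toDual ℝ E g) (x + (0:ℝ) • (y - x)) := by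
      simpa using hF
    have := hF'.comp_hasDerivAt 0 hc
    simpa [InnerProductSpace.toDual_apply_apply, Function.comp_def] using this
  have hslope := hasDerivAt_iff_tendsto_slope.mp hφ
  have hslope' : Filter.Tendsto (slope (fun s : ℝ => f (x + s • (y - x))) 0)
      (nhdsWithin 0 (Set.Ioi 0)) (nhds (inner ℝ g (y - x))) :=
    hslope.mono_left (nhdsWithin_mono _ (fun s hs => ne_of_gt hs))
  refine le_of_tendsto hslope' ?_
  filter_upwards [Ioo_mem_nhdsGT_of_mem (Set.mem_Ico.mpr ⟨le_rfl, one_pos⟩)] with s hs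
  obtain ⟨hs0, hs1⟩ := hs
  have hcvx := hf.2 (Set.mem_univ x) (Set.mem_univ y)
    (show (0:ℝ) ≤ 1 - s by linarith) hs0.le (by ring)
  rw [smul_eq_mul, smul_eq_mul] at hcvx
  have hxy : x + s • (y - x) = (1 - s) • x + s • y := by module
  have key : f (x + s • (y - x)) - f x ≤ s * (f y - f x) := by
    rw [hxy]
    calc f ((1-s) • x + s • y) - f x ≤ ((1-s) * f x + s * f y) - f x := by linarith
      _ = s * (f y - f x) := by ring
  rw [slope_def_field, sub_zero, div_le_iff₀ hs0]
  simpa [mul_comm] using key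

omit [CompleteSpace E] in
/-- Projections onto convex sets are contractive toward points of the set. -/
lemma ogd_proj_le {X : Set E} (hXconv : Convex ℝ X) {P : E → E}
    (hP : ∀ y, P y ∈ X ∧ ∀ z ∈ X, ‖P y - y‖ ≤ ‖z - y‖) (y : E) {z : E} (hz : z ∈ X) :
    ‖P y - z‖ ≤ ‖y - z‖ := by
  have hPX := (hP y).1
  haveI : Nonempty X := ⟨⟨P y, hPX⟩⟩
  have hmin : ‖y - P y‖ = ⨅ w : X, ‖y - w‖ := by
    refine le_antisymm (le_ciInf fun w => ?_) (ciInf_le ⟨0, fun _ ⟨_, h⟩ => h ▸ norm_nonneg _⟩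
      (⟨P y, hPX⟩ : X))
    have := (hP y).2 w w.2
    rwa [norm_sub_rev, norm_sub_rev (w : E)] at this
  have h1 : (inner ℝ (y - P y) (z - P y) : ℝ) ≤ 0 :=
    (norm_eq_iInf_iff_real_inner_le_zero hXconv hPX).mp hmin z hz
  have h2 : ‖y - z‖ ^ 2 = ‖y - P y‖ ^ 2 - 2 * inner ℝ (y - P y) (z - P y) + ‖z - P y‖ ^ 2 := by
    have : y - z = (y - P y) - (z - P y) := by abel
    rw [this, norm_sub_sq_real]
  have h3 : ‖P y - z‖ ^ 2 ≤ ‖y - z‖ ^ 2 := by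
    rw [norm_sub_rev (P y)]
    nlinarith [sq_nonneg ‖y - P y‖]
  exact (pow_le_pow_iff_left₀ (norm_nonneg _) (norm_nonneg _) two_ne_zero).mp h3

end Aux

/-- Online gradient descent with constant stepsize `α = D/(G√T)` on convex
differentiable losses with gradients bounded by `G` over a compact convex
decision set of diameter `D` achieves regret at most `D G √T`. -/
theorem ogd_regret_sqrtT
    (d T : ℕ) (hT : 1 ≤ T)
    (X : Set (EuclideanSpace ℝ (Fin d)))
    (hXc : IsCompact X) (hXconv : Convex ℝ X) (hXne : X.Nonempty)
    (D G : ℝ) (hD : 0 < D) (hG : 0 < G)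
    (hdiam : ∀ x ∈ X, ∀ y ∈ X, ‖x - y‖ ≤ D)
    (ℓ : ℕ → EuclideanSpace ℝ (Fin d) → ℝ)
    (g : ℕ → EuclideanSpace ℝ (Fin d) → EuclideanSpace ℝ (Fin d))
    (hconv : ∀ t, ConvexOn ℝ Set.univ (ℓ t))
    (hgrad : ∀ t x, HasGradientAt (ℓ t) (g t x) x)
    (hGbound : ∀ t, ∀ x ∈ X, ‖g t x‖ ≤ G)
    (P : EuclideanSpace ℝ (Fin d) → EuclideanSpace ℝ (Fin d))
    (hP : ∀ y, P y ∈ X ∧ ∀ z ∈ X, ‖P y - y‖ ≤ ‖z - y‖)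
    (α : ℝ) (hα : α = D / (G * Real.sqrt T))
    (x : ℕ → EuclideanSpace ℝ (Fin d))
    (hx1 : x 1 ∈ X)
    (hiter : ∀ t, 1 ≤ t → x (t + 1) = P (x t - α • g t (x t))) :
    (∑ t ∈ Finset.Icc 1 T, ℓ t (x t)) -
      sInf ((fun z => ∑ t ∈ Finset.Icc 1 T, ℓ t z) '' X) ≤ D * G * Real.sqrt T := by
  have hT0 : (0:ℝ) < T := by exact_mod_cast Nat.lt_of_lt_of_le Nat.zero_lt_one hT
  have hsT : 0 < Real.sqrt T := Real.sqrt_pos.mpr hT0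
  have hα0 : 0 < α := by rw [hα]; positivity
  -- iterates stay in X
  have hxX : ∀ t, 1 ≤ t → x t ∈ X := by
    intro t ht
    induction t with
    | zero => omega
    | succ n ih =>
      rcases Nat.eq_or_lt_of_le ht with h1 | h1
      · rwa [← h1]
      · have hn : 1 ≤ n := by omega
        rw [hiter n hn]; exact (hP _).1
  -- per-comparator regret bound
  have key : ∀ z ∈ X, (∑ t ∈ Finset.Icc 1 T, ℓ t (x t)) - (∑ t ∈ Finset.Icc 1 T, ℓ t z)
      ≤ D * G * Real.sqrt T := by
    intro z hz
    set A : ℕ → ℝ := fun t => ‖x t - z‖ ^ 2 with hA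
    have step : ∀ t, 1 ≤ t → ℓ t (x t) - ℓ t z ≤
        (A t - A (t + 1)) / (2 * α) + α / 2 * G ^ 2 := by
      intro t ht
      have hxt : x t ∈ X := hxX t ht
      have hfo := ogd_first_order (hconv t) (hgrad t (x t)) z
      have h1 : ℓ t (x t) - ℓ t z ≤ (inner ℝ (g t (x t)) (x t - z) : ℝ) := by
        have : (inner ℝ (g t (x t)) (z - x t) : ℝ) = - inner ℝ (g t (x t)) (x t - z) := by
          rw [show z - x t = -(x t - z) by abel, inner_neg_right]
        linarith [hfo, this ▸ hfo]
      have hy : ‖(x t - α • g t (x t)) - z‖ ^ 2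
          = A t - 2 * α * (inner ℝ (g t (x t)) (x t - z) : ℝ) + α ^ 2 * ‖g t (x t)‖ ^ 2 := by
        have : (x t - α • g t (x t)) - z = (x t - z) - α • g t (x t) := by abel
        rw [this, norm_sub_sq_real, real_inner_smul_right, norm_smul, hA,
          real_inner_comm]
        simp [mul_pow]
        ring
      have hproj : A (t + 1) ≤ ‖(x t - α • g t (x t)) - z‖ ^ 2 := by
        rw [hA]
        simp only []
        rw [hiter t ht]
        exact pow_le_pow_left₀ (norm_nonneg _) (ogd_proj_le hXconv hP _ hz) 2
      have hginner : (inner ℝ (g t (x t)) (x t - z) : ℝ)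
          ≤ (A t - A (t + 1)) / (2 * α) + α / 2 * ‖g t (x t)‖ ^ 2 := by
        have heq : (A t - A (t + 1)) / (2 * α) + α / 2 * ‖g t (x t)‖ ^ 2
            = (A t - A (t + 1) + α ^ 2 * ‖g t (x t)‖ ^ 2) / (2 * α) := by
          field_simp
        rw [heq, le_div_iff₀ (by positivity)]
        linarith [hy, hproj]
      have hgG : α / 2 * ‖g t (x t)‖ ^ 2 ≤ α / 2 * G ^ 2 := by
        have h6 := hGbound t (x t) hxt
        have h7 : ‖g t (x t)‖ ^ 2 ≤ G ^ 2 :=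
          pow_le_pow_left₀ (norm_nonneg _) h6 2
        nlinarith
      linarith
    -- sum the per-step bounds
    have hsum1 : ∑ t ∈ Finset.Icc 1 T, (ℓ t (x t) - ℓ t z)
        ≤ ∑ t ∈ Finset.Icc 1 T, ((A t - A (t + 1)) / (2 * α) + α / 2 * G ^ 2) :=
      Finset.sum_le_sum fun t ht => step t (Finset.mem_Icc.mp ht).1
    have htel : ∑ t ∈ Finset.Icc 1 T, (A t - A (t + 1)) = A 1 - A (T + 1) := by
      rw [← Finset.Ico_add_one_right_eq_Icc, Finset.sum_Ico_eq_sum_range]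
      have h := Finset.sum_range_sub' (fun i => A (1 + i)) T
      simpa [Nat.add_comm, Nat.add_assoc] using h
    have hsum2 : ∑ t ∈ Finset.Icc 1 T, ((A t - A (t + 1)) / (2 * α) + α / 2 * G ^ 2)
        = (A 1 - A (T + 1)) / (2 * α) + (T : ℝ) * (α / 2 * G ^ 2) := by
      rw [Finset.sum_add_distrib, ← Finset.sum_div, htel, Finset.sum_const,
        Nat.card_Icc]
      simp [nsmul_eq_mul]
    have hA1 : A 1 ≤ D ^ 2 := by
      show ‖x 1 - z‖ ^ 2 ≤ D ^ 2
      exact pow_le_pow_left₀ (norm_nonneg _) (hdiam (x 1) hx1 z hz) 2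
    have hAT : 0 ≤ A (T + 1) := sq_nonneg _
    have harith : D ^ 2 / (2 * α) + (T : ℝ) * (α / 2 * G ^ 2) = D * G * Real.sqrt T := by
      have hTs : Real.sqrt T * Real.sqrt T = (T : ℝ) := Real.mul_self_sqrt hT0.le
      rw [hα]
      field_simp
      linear_combination (-1) * hTs
    have hmono : (A 1 - A (T + 1)) / (2 * α) ≤ D ^ 2 / (2 * α) := by
      gcongr
      linarith
    have hfinal : ∑ t ∈ Finset.Icc 1 T, (ℓ t (x t) - ℓ t z) ≤ D * G * Real.sqrt T := by
      rw [← harith]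
      calc ∑ t ∈ Finset.Icc 1 T, (ℓ t (x t) - ℓ t z)
          ≤ (A 1 - A (T + 1)) / (2 * α) + (T : ℝ) * (α / 2 * G ^ 2) := by
            rw [← hsum2]; exact hsum1
        _ ≤ D ^ 2 / (2 * α) + (T : ℝ) * (α / 2 * G ^ 2) := by
            linarith
    rw [← Finset.sum_sub_distrib]
    exact hfinal
  -- conclude via sInf
  have hlb : (∑ t ∈ Finset.Icc 1 T, ℓ t (x t)) - D * G * Real.sqrt T
      ≤ sInf ((fun z => ∑ t ∈ Finset.Icc 1 T, ℓ t z) '' X) := by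
    refine le_csInf (hXne.image _) ?_
    rintro b ⟨z, hz, rfl⟩
    linarith [key z hz]
  linarith
end

section
/- For online gradient descent on α-strongly convex differentiable losses with gradients bounded by G on X and stepsizes α_t = 1/(α t), the regret satisfies Reg(T) ≤ (G²/(2α)) (1 + log T). -/
open Finset

variable {E : Type*} [NormedAddCommGroup E] [InnerProductSpace ℝ E] [CompleteSpace E]

lemma convex_grad_ineq {f : E → ℝ} (hf : ConvexOn ℝ Set.univ f)
    {x x' : E} (hg : HasGradientAt f x' x) (y : E) :
    (inner ℝ x' (y - x) : ℝ) ≤ f y - f x := by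
  set φ : ℝ → ℝ := fun s => f (x + s • (y - x)) with hφ
  have hline : HasDerivAt (fun s : ℝ => x + s • (y - x)) (y - x) 0 := by
    simpa using ((hasDerivAt_id (0 : ℝ)).smul_const (y - x)).const_add x
  have hfd : HasFDerivAt f (InnerProductSpace.toDual ℝ E x') (x + (0 : ℝ) • (y - x)) := by
    simpa using (hasGradientAt_iff_hasFDerivAt.mp hg)
  have hφd : HasDerivAt φ ((inner ℝ x' (y - x) : ℝ)) 0 := by
    exact (hfd.comp_hasDerivAt 0 hline).congr_deriv (by simp [InnerProductSpace.toDual_apply_apply])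
  have hφc : ConvexOn ℝ Set.univ φ := by
    have := hf.comp_affineMap (AffineMap.lineMap x y)
    have heq : φ = f ∘ (AffineMap.lineMap x y) := by
      funext s
      simp [hφ, AffineMap.lineMap_apply, add_comm]
    rw [heq]
    simpa using this
  have := hφc.le_slope_of_hasDerivAt (Set.mem_univ (0:ℝ)) (Set.mem_univ (1:ℝ))
    one_pos hφd
  have hs : slope φ 0 1 = f y - f x := by
    simp [slope, hφ]
  linarith [this.trans_eq hs]

lemma strong_grad_ineq {f : E → ℝ} {α : ℝ} (hf : StrongConvexOn Set.univ α f)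
    {x x' : E} (hg : HasGradientAt f x' x) (y : E) :
    f x - f y ≤ (inner ℝ x' (x - y) : ℝ) - α / 2 * ‖x - y‖ ^ 2 := by
  have hF : ConvexOn ℝ Set.univ fun z => f z - α / 2 * ‖z‖ ^ 2 :=
    strongConvexOn_iff_convex.mp hf
  have hsq : HasFDerivAt (fun z : E => ‖z‖ ^ 2) (2 • (innerSL ℝ x)) x := by
    simpa using (hasFDerivAt_id x).norm_sq
  have hFd : HasFDerivAt (fun z => f z - α / 2 * ‖z‖ ^ 2)
      (InnerProductSpace.toDual ℝ E (x' - α • x)) x := by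
    have h1 : HasFDerivAt (fun z : E => α / 2 * ‖z‖ ^ 2) ((α / 2) • (2 • (innerSL ℝ x))) x :=
      hsq.const_mul (α / 2)
    have h2 := (hasGradientAt_iff_hasFDerivAt.mp hg).sub h1
    refine h2.congr_fderiv ?_
    ext v
    simp [InnerProductSpace.toDual_apply_apply, inner_sub_left, real_inner_smul_left]
    ring
  have hFg : HasGradientAt (fun z => f z - α / 2 * ‖z‖ ^ 2) (x' - α • x) x :=
    hasGradientAt_iff_hasFDerivAt.mpr hFd
  have key := convex_grad_ineq hF hFg y
  rw [inner_sub_left, real_inner_smul_left] at key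
  have hexp : ‖x - y‖ ^ 2 = ‖x‖ ^ 2 - 2 * (inner ℝ x y : ℝ) + ‖y‖ ^ 2 := norm_sub_sq_real x y
  have h3 : (inner ℝ x' (x - y) : ℝ) = -(inner ℝ x' (y - x) : ℝ) := by
    rw [← inner_neg_right]; congr 1; abel
  have h4 : (inner ℝ x (y - x) : ℝ) = (inner ℝ x y : ℝ) - ‖x‖ ^ 2 := by
    rw [inner_sub_right, real_inner_self_eq_norm_sq]
  rw [h4] at key
  rw [h3, hexp]
  nlinarith [key]

lemma proj_contract {X : Set E} (hXconv : Convex ℝ X) {y p z : E}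
    (hp : p ∈ X) (hmin : ∀ w ∈ X, ‖p - y‖ ≤ ‖w - y‖) (hz : z ∈ X) :
    ‖p - z‖ ^ 2 ≤ ‖y - z‖ ^ 2 := by
  haveI : Nonempty X := ⟨⟨p, hp⟩⟩
  have hinf : ‖y - p‖ = ⨅ w : X, ‖y - w‖ := by
    apply le_antisymm
    · exact le_ciInf fun w => by
        rw [norm_sub_rev, norm_sub_rev y]; exact hmin w w.2
    · have hbdd : BddBelow (Set.range fun w : X => ‖y - (w : E)‖) :=
        ⟨0, by rintro b ⟨w, rfl⟩; exact norm_nonneg _⟩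
      exact ciInf_le hbdd ⟨p, hp⟩
  have hvar := (norm_eq_iInf_iff_real_inner_le_zero hXconv hp).mp hinf z hz
  have hexp : ‖y - z‖ ^ 2 = ‖y - p‖ ^ 2 - 2 * (inner ℝ (y - p) (z - p) : ℝ) + ‖z - p‖ ^ 2 := by
    have : y - z = (y - p) - (z - p) := by abel
    rw [this, norm_sub_sq_real]
  rw [norm_sub_rev p z]
  nlinarith [sq_nonneg ‖y - p‖]

/-- Online gradient descent with stepsizes `α_t = 1/(α t)` on `α`-strongly convex
differentiable losses with gradients bounded by `G` achieves logarithmic regret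
`Reg(T) ≤ (G²/(2α)) (1 + log T)`. -/
theorem ogd_regret_log
    (d T : ℕ) (hT : 1 ≤ T)
    (X : Set (EuclideanSpace ℝ (Fin d)))
    (hXc : IsCompact X) (hXconv : Convex ℝ X) (hXne : X.Nonempty)
    (α G : ℝ) (hαpos : 0 < α) (hG : 0 < G)
    (ℓ : ℕ → EuclideanSpace ℝ (Fin d) → ℝ)
    (g : ℕ → EuclideanSpace ℝ (Fin d) → EuclideanSpace ℝ (Fin d))
    (hsc : ∀ t, StrongConvexOn Set.univ α (ℓ t))
    (hgrad : ∀ t x, HasGradientAt (ℓ t) (g t x) x)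
    (hGbound : ∀ t, ∀ x ∈ X, ‖g t x‖ ≤ G)
    (P : EuclideanSpace ℝ (Fin d) → EuclideanSpace ℝ (Fin d))
    (hP : ∀ y, P y ∈ X ∧ ∀ z ∈ X, ‖P y - y‖ ≤ ‖z - y‖)
    (x : ℕ → EuclideanSpace ℝ (Fin d))
    (hx1 : x 1 ∈ X)
    (hiter : ∀ t, 1 ≤ t → x (t + 1) = P (x t - (1 / (α * t)) • g t (x t))) :
    (∑ t ∈ Finset.Icc 1 T, ℓ t (x t)) -
      sInf ((fun z => ∑ t ∈ Finset.Icc 1 T, ℓ t z) '' X) ≤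
      (G ^ 2 / (2 * α)) * (1 + Real.log T) := by
  classical
  have hcont : ∀ t : ℕ, Continuous (ℓ t) := fun t =>
    continuous_iff_continuousAt.mpr fun z =>
      (hasGradientAt_iff_hasFDerivAt.mp (hgrad t z)).differentiableAt.continuousAt
  obtain ⟨c, hcX, hcmin⟩ := hXc.exists_isMinOn hXne
    ((continuous_finset_sum _ fun t _ => hcont t).continuousOn)
  have hsInfge : (∑ t ∈ Finset.Icc 1 T, ℓ t c) ≤
      sInf ((fun z => ∑ t ∈ Finset.Icc 1 T, ℓ t z) '' X) := by
    apply le_csInf (hXne.image _)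
    rintro b ⟨z, hz, rfl⟩
    exact hcmin hz
  have hmem : ∀ t, 1 ≤ t → x t ∈ X := by
    intro t ht
    induction t, ht using Nat.le_induction with
    | base => exact hx1
    | succ n hn ih => rw [hiter n hn]; exact (hP _).1
  set a : ℕ → ℝ := fun t => ‖x t - c‖ ^ 2 with ha
  set b : ℕ → ℝ := fun t => α * ((t : ℝ) - 1) / 2 * a t with hb
  have key : ∀ t, 1 ≤ t →
      ℓ t (x t) - ℓ t c ≤ (b t - b (t + 1)) + G ^ 2 / (2 * α * t) := by
    intro t ht
    have hτ : (1 : ℝ) ≤ (t : ℝ) := by exact_mod_cast ht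
    have hατ : 0 < α * t := mul_pos hαpos (lt_of_lt_of_le zero_lt_one hτ)
    have hsg := strong_grad_ineq (hsc t) (hgrad t (x t)) c
    have hint : a (t + 1) ≤ ‖(x t - (1 / (α * t)) • g t (x t)) - c‖ ^ 2 := by
      rw [ha]
      simp only
      rw [hiter t ht]
      exact proj_contract hXconv (hP _).1 (fun w hw => (hP _).2 w hw) hcX
    have hrw : (x t - (1 / (α * t)) • g t (x t)) - c
        = (x t - c) - (1 / (α * t)) • g t (x t) := by abel
    have hexp : ‖(x t - (1 / (α * t)) • g t (x t)) - c‖ ^ 2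
        = a t - 2 * (1 / (α * t)) * (inner ℝ (g t (x t)) (x t - c) : ℝ)
          + (1 / (α * t)) ^ 2 * ‖g t (x t)‖ ^ 2 := by
      rw [hrw, norm_sub_sq_real, real_inner_smul_right, norm_smul]
      rw [Real.norm_eq_abs, abs_of_pos (by positivity : (0:ℝ) < 1 / (α * t))]
      simp only [ha]
      rw [real_inner_comm]
      ring
    have hGb : ‖g t (x t)‖ ≤ G := hGbound t _ (hmem t ht)
    have hgsq : ‖g t (x t)‖ ^ 2 ≤ G ^ 2 := by nlinarith [norm_nonneg (g t (x t))]
    have h1 : a (t + 1) ≤ a t - 2 * (1 / (α * t)) * (inner ℝ (g t (x t)) (x t - c) : ℝ)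
        + (1 / (α * t)) ^ 2 * G ^ 2 := by
      rw [hexp] at hint
      nlinarith [sq_nonneg (1 / (α * t))]
    have h2 : α * t / 2 * a (t + 1) ≤ α * t / 2 *
        (a t - 2 * (1 / (α * t)) * (inner ℝ (g t (x t)) (x t - c) : ℝ)
          + (1 / (α * t)) ^ 2 * G ^ 2) :=
      mul_le_mul_of_nonneg_left h1 (by positivity)
    have h3 : α * t / 2 *
        (a t - 2 * (1 / (α * t)) * (inner ℝ (g t (x t)) (x t - c) : ℝ)
          + (1 / (α * t)) ^ 2 * G ^ 2)
        = α * t / 2 * a t - (inner ℝ (g t (x t)) (x t - c) : ℝ) + G ^ 2 / (2 * α * t) := by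
      field_simp
    have hb1 : b t = α * ((t : ℝ) - 1) / 2 * a t := rfl
    have hb2 : b (t + 1) = α * (t : ℝ) / 2 * a (t + 1) := by
      simp only [hb]
      push_cast
      ring
    rw [hb1, hb2]
    rw [h3] at h2
    have hsg' : ℓ t (x t) - ℓ t c ≤ (inner ℝ (g t (x t)) (x t - c) : ℝ) - α / 2 * a t := hsg
    linarith
  -- summation
  have hsum : (∑ t ∈ Finset.Icc 1 T, ℓ t (x t)) - (∑ t ∈ Finset.Icc 1 T, ℓ t c)
      ≤ (∑ t ∈ Finset.Icc 1 T, (b t - b (t + 1)))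
        + ∑ t ∈ Finset.Icc 1 T, G ^ 2 / (2 * α * t) := by
    rw [← Finset.sum_sub_distrib, ← Finset.sum_add_distrib]
    exact Finset.sum_le_sum fun t htmem => key t (Finset.mem_Icc.mp htmem).1
  have htel : (∑ t ∈ Finset.Icc 1 T, (b t - b (t + 1))) = b 1 - b (1 + T) := by
    rw [← Finset.Ico_add_one_right_eq_Icc, Finset.sum_Ico_eq_sum_range]
    simpa [add_assoc] using Finset.sum_range_sub' (fun i => b (1 + i)) T
  have hb1z : b 1 = 0 := by simp [hb]
  have hbT : 0 ≤ b (1 + T) := by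
    have : (0:ℝ) ≤ α * ((1 + T : ℕ) : ℝ) - α := by
      push_cast
      nlinarith [Nat.cast_nonneg (α := ℝ) T]
    have h0 : 0 ≤ a (1 + T) := sq_nonneg _
    simp only [hb]
    have : (0:ℝ) ≤ α * (((1 + T : ℕ) : ℝ) - 1) / 2 := by
      push_cast
      nlinarith [Nat.cast_nonneg (α := ℝ) T]
    exact mul_nonneg this h0
  have hharm : (∑ t ∈ Finset.Icc 1 T, G ^ 2 / (2 * α * t))
      ≤ G ^ 2 / (2 * α) * (1 + Real.log T) := by
    have hsplit : (∑ t ∈ Finset.Icc 1 T, G ^ 2 / (2 * α * t))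
        = G ^ 2 / (2 * α) * ∑ t ∈ Finset.Icc 1 T, ((t : ℝ))⁻¹ := by
      rw [Finset.mul_sum]
      refine Finset.sum_congr rfl fun t _ => ?_
      rw [← div_div, div_eq_mul_inv]
    have hH : (∑ t ∈ Finset.Icc 1 T, ((t : ℝ))⁻¹) = (harmonic T : ℝ) := by
      rw [harmonic_eq_sum_Icc]
      push_cast
      rfl
    rw [hsplit, hH]
    exact mul_le_mul_of_nonneg_left (harmonic_le_one_add_log T) (by positivity)
  linarith [hsum, hsInfge, hharm, htel, hb1z, hbT]
end
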